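/- For diagrams d in the planar rook monoid P_n, define X_d = Σ_{d′ ⊆ d} (−1)^{|d \ d′|} d′ in the monoid algebra ℂP_n, where d′ ranges over diagrams obtained from d by deleting edges (restricting the partial bijection to subsets of its domain) and |d \ d′| is the number of deleted edges. Then X_{d₁} X_{d₂} = δ_{β(d₁),τ(d₂)} X_{d₃}, where β(d) is the domain of d, τ(d) its image, and d₃ is the unique diagram with image τ(d₁) and domain β(d₂). In particular, the elements X_d are matrix units for ℂP_n. -/

import Mathlib

/-- The planar rook monoid `P_n`: order-preserving partial bijections of `Fin n`,
modeled as maps `Fin n → Option (Fin n)` that are injective and strictly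
order-preserving on their domain. -/
def PRM (n : ℕ) : Type :=
  {f : Fin n → Option (Fin n) //
    (∀ i j a, f i = some a → f j = some a → i = j) ∧
    (∀ i j a b, f i = some a → f j = some b → i < j → a < b)}

instance (n : ℕ) : DecidableEq (PRM n) :=
  inferInstanceAs (DecidableEq {f : Fin n → Option (Fin n) // _})

/-- Composition of diagrams (concatenation) makes `P_n` a monoid. -/
instance (n : ℕ) : Monoid (PRM n) where
  one := ⟨fun x => some x, by
    constructor
    · intro i j a h1 h2; simp_all
    · intro i j a b h1 h2 h3; simp_all⟩
  mul f g := ⟨fun x => (g.1 x).bind f.1, by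
    constructor
    · intro i j a hi hj
      obtain ⟨b, hb, hfb⟩ := Option.bind_eq_some_iff.mp hi
      obtain ⟨c, hc, hfc⟩ := Option.bind_eq_some_iff.mp hj
      have hbc : b = c := f.2.1 b c a hfb hfc
      subst hbc
      exact g.2.1 i j b hb hc
    · intro i j a b hi hj hij
      obtain ⟨c, hc, hfc⟩ := Option.bind_eq_some_iff.mp hi
      obtain ⟨e, he, hfe⟩ := Option.bind_eq_some_iff.mp hj
      exact f.2.2 c e a b hfc hfe (g.2.2 i j c e hc he hij)⟩
  mul_assoc a b c := by
    apply Subtype.ext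
    funext x
    exact (Option.bind_assoc (c.1 x) b.1 a.1).symm
  one_mul a := by
    apply Subtype.ext
    funext x
    exact Option.bind_fun_some (a.1 x)
  mul_one a := by
    apply Subtype.ext
    funext x
    rfl

/-- The domain (bottom row) `β(d)` of a diagram. -/
def rookDom {n : ℕ} (d : PRM n) : Finset (Fin n) :=
  Finset.univ.filter (fun i => (d.1 i).isSome)

/-- The image (top row) `τ(d)` of a diagram. -/
def rookIm {n : ℕ} (d : PRM n) : Finset (Fin n) :=
  Finset.univ.filter (fun j => ∃ i, d.1 i = some j)

/-- The sub-diagram `d' ⊆ d` obtained by restricting `d` to the subset `t` of its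
domain (deleting the other edges). -/
def rookRestrict {n : ℕ} (d : PRM n) (t : Finset (Fin n)) : PRM n :=
  ⟨fun i => if i ∈ t then d.1 i else none, by
    obtain ⟨h1, h2⟩ := d.2
    constructor
    · intro i j a hi hj
      by_cases hit : i ∈ t <;> by_cases hjt : j ∈ t <;> simp [hit, hjt] at hi hj
      exact h1 i j a hi hj
    · intro i j a b hi hj hij
      by_cases hit : i ∈ t <;> by_cases hjt : j ∈ t <;> simp [hit, hjt] at hi hj
      exact h2 i j a b hi hj hij⟩

/-- The element `X_d = ∑_{d' ⊆ d} (−1)^{|d \ d'|} d'` of the planar rook algebra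
`ℂ P_n`, the sum over sub-diagrams `d'` of `d`, signed by the number of deleted
edges. -/
noncomputable def Xd {n : ℕ} (d : PRM n) : MonoidAlgebra ℂ (PRM n) :=
  ∑ t ∈ (rookDom d).powerset,
    ((-1 : ℂ) ^ ((rookDom d).card - t.card)) • MonoidAlgebra.single (rookRestrict d t) 1

open Finset

section PRMaux

variable {n : ℕ}

lemma PRM.mul_apply (f g : PRM n) (x : Fin n) : (f * g).1 x = (g.1 x).bind f.1 := rfl

lemma mem_rookDom {d : PRM n} {i : Fin n} : i ∈ rookDom d ↔ (d.1 i).isSome := by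
  simp [rookDom]

lemma mem_rookIm {d : PRM n} {j : Fin n} : j ∈ rookIm d ↔ ∃ i, d.1 i = some j := by
  simp [rookIm]

lemma restrict_apply (d : PRM n) (t : Finset (Fin n)) (i : Fin n) :
    (rookRestrict d t).1 i = if i ∈ t then d.1 i else none := rfl

/-- The subset of `t` used in composing restrictions. -/
def phi (d₂ : PRM n) (s t : Finset (Fin n)) : Finset (Fin n) :=
  t.filter (fun x => ∃ y ∈ s, d₂.1 x = some y)

lemma restrict_mul (d₁ d₂ : PRM n) (s t : Finset (Fin n)) :
    rookRestrict d₁ s * rookRestrict d₂ t = rookRestrict (d₁ * d₂) (phi d₂ s t) := by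
  apply Subtype.ext; funext x
  rw [PRM.mul_apply, restrict_apply]
  by_cases hxt : x ∈ t
  · cases hy : d₂.1 x with
    | none => simp [phi, restrict_apply, PRM.mul_apply, hxt, hy]
    | some y =>
      by_cases hys : y ∈ s
      · have hmem : x ∈ phi d₂ s t := by simp only [phi, mem_filter]; exact ⟨hxt, y, hys, hy⟩
        simp [restrict_apply, PRM.mul_apply, hxt, hy, hys, hmem]
      · have hmem : x ∉ phi d₂ s t := by
          simp only [phi, mem_filter, not_and, not_exists]
          rintro - y' hy' hyy
          rw [hy] at hyy
          exact absurd (Option.some.inj hyy ▸ hy') hys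
        simp [restrict_apply, PRM.mul_apply, hxt, hy, hys, hmem]
  · have hmem : x ∉ phi d₂ s t := fun h => hxt (Finset.filter_subset _ _ h)
    simp [restrict_apply, hxt, hmem]

lemma neg_one_pow_sub_c {a b : ℕ} (h : b ≤ a) : ((-1:ℂ))^(a-b) = (-1)^a * (-1)^b := by
  have h1 : ((-1:ℂ))^(a-b) * (-1)^b = (-1)^a := by rw [← pow_add, Nat.sub_add_cancel h]
  have h2 : ((-1:ℂ))^b * (-1)^b = 1 := by rw [← pow_add, ← two_mul, pow_mul]; norm_num
  calc ((-1:ℂ))^(a-b) = (-1)^(a-b) * ((-1)^b * (-1)^b) := by rw [h2, mul_one]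
    _ = ((-1)^(a-b) * (-1)^b) * (-1)^b := by ring
    _ = (-1)^a * (-1)^b := by rw [h1]

lemma sum_toggle_eq_zero {M : Type*} [AddCommGroup M] [Module ℂ M]
    (D : Finset (Fin n)) (F : Finset (Fin n) → M) (x₀ : Fin n) (hx₀ : x₀ ∈ D)
    (hins : ∀ t, F (insert x₀ t) = F t) (hers : ∀ t, F (t.erase x₀) = F t) :
    ∑ t ∈ D.powerset, ((-1:ℂ))^t.card • F t = 0 := by
  apply Finset.sum_involution (fun t _ => if x₀ ∈ t then t.erase x₀ else insert x₀ t)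
  · intro t ht
    by_cases h : x₀ ∈ t
    · simp only [h, if_pos]
      rw [hers t, ← add_smul]
      have hc : (t.erase x₀).card + 1 = t.card := Finset.card_erase_add_one h
      rw [← hc, pow_succ]
      ring_nf
      rw [zero_smul]
    · simp only [h, if_neg, if_false]
      rw [hins t, ← add_smul]
      have hc : (insert x₀ t).card = t.card + 1 := Finset.card_insert_of_notMem h
      rw [hc, pow_succ]
      ring_nf
      rw [zero_smul]
  · intro t ht _
    by_cases h : x₀ ∈ t
    · simp only [h, if_pos]
      intro he
      have := Finset.notMem_erase x₀ t
      rw [he] at this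
      exact this h
    · simp only [h, if_neg, if_false]
      intro he
      exact h (he ▸ Finset.mem_insert_self x₀ t)
  · intro t ht
    by_cases h : x₀ ∈ t
    · simp only [h, if_pos, Finset.notMem_erase, if_neg, if_false, Finset.insert_erase h]
    · simp only [h, if_neg, if_false, Finset.mem_insert_self, if_pos, Finset.erase_insert h]
  · intro t ht
    rw [Finset.mem_powerset] at ht
    by_cases h : x₀ ∈ t
    · simp only [h, if_pos]
      exact Finset.mem_powerset.mpr ((Finset.erase_subset _ _).trans ht)
    · simp only [h, if_neg, if_false]
      exact Finset.mem_powerset.mpr (Finset.insert_subset hx₀ ht)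

end PRMaux

section PRMaux2

variable {n : ℕ}

lemma sum_sign_filter_subset (A B : Finset (Fin n)) :
    ∑ s ∈ A.powerset, (if B ⊆ s then ((-1:ℂ))^(A.card - s.card) else 0)
      = if B = A then 1 else 0 := by
  by_cases hBA : B ⊆ A
  · by_cases hB : B = A
    · subst hB
      rw [if_pos rfl, Finset.sum_eq_single B]
      · simp
      · intro s hs hne
        rw [if_neg]
        intro hBs
        exact hne (Finset.Subset.antisymm (Finset.mem_powerset.mp hs) hBs)
      · intro h; exact absurd (Finset.mem_powerset.mpr le_rfl) h
    · rw [if_neg hB]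
      obtain ⟨x₀, hx₀A, hx₀B⟩ : ∃ x, x ∈ A ∧ x ∉ B := by
        by_contra h
        push_neg at h
        exact hB (Finset.Subset.antisymm hBA (fun x hx => h x hx))
      calc ∑ s ∈ A.powerset, (if B ⊆ s then ((-1:ℂ))^(A.card - s.card) else 0)
          = ∑ s ∈ A.powerset, (-1:ℂ)^A.card * ((-1:ℂ)^s.card • (if B ⊆ s then (1:ℂ) else 0)) := by
            apply Finset.sum_congr rfl
            intro s hs
            rw [smul_eq_mul]
            by_cases h : B ⊆ s
            · rw [if_pos h, if_pos h,
                neg_one_pow_sub_c (Finset.card_le_card (Finset.mem_powerset.mp hs))]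
              ring
            · rw [if_neg h, if_neg h]; ring
        _ = (-1:ℂ)^A.card * ∑ s ∈ A.powerset, ((-1:ℂ)^s.card • (if B ⊆ s then (1:ℂ) else 0)) := by
            rw [Finset.mul_sum]
        _ = 0 := by
            rw [sum_toggle_eq_zero A _ x₀ hx₀A ?_ ?_, mul_zero]
            · intro t
              simp [Finset.subset_insert_iff_of_notMem hx₀B]
            · intro t
              simp [Finset.subset_erase, hx₀B]
  · rw [if_neg (by rintro rfl; exact hBA le_rfl)]
    apply Finset.sum_eq_zero
    intro s hs
    rw [if_neg]
    intro hBs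
    exact hBA (hBs.trans (Finset.mem_powerset.mp hs))

lemma card_dom_eq_card_im (d : PRM n) : (rookDom d).card = (rookIm d).card := by
  apply Finset.card_bij (fun i hi => (d.1 i).get (mem_rookDom.mp hi))
  · intro i hi
    rw [mem_rookIm]
    exact ⟨i, (Option.some_get _).symm⟩
  · intro i hi j hj h
    apply d.2.1 i j ((d.1 i).get (mem_rookDom.mp hi)) (Option.some_get _).symm
    rw [h]
    exact (Option.some_get _).symm
  · intro j hj
    obtain ⟨i, hi⟩ := mem_rookIm.mp hj
    have hdom : i ∈ rookDom d := mem_rookDom.mpr (by rw [hi]; rfl)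
    refine ⟨i, hdom, ?_⟩
    simp [Option.get_of_mem _ hi]

lemma apply_orderEmb (e : PRM n) {S T : Finset (Fin n)} (hS : rookDom e = S) (hT : rookIm e = T)
    (hcard : T.card = S.card) (j : Fin S.card) :
    e.1 (S.orderEmbOfFin rfl j) = some (T.orderEmbOfFin hcard j) := by
  subst hS; subst hT
  have hmem : ∀ j : Fin (rookDom e).card, (e.1 ((rookDom e).orderEmbOfFin rfl j)).isSome :=
    fun j => mem_rookDom.mp ((rookDom e).orderEmbOfFin_mem rfl j)
  have hfe : ∀ j, e.1 ((rookDom e).orderEmbOfFin rfl j)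
      = some ((e.1 ((rookDom e).orderEmbOfFin rfl j)).get (hmem j)) :=
    fun j => (Option.some_get _).symm
  have hfT : ∀ j, (e.1 ((rookDom e).orderEmbOfFin rfl j)).get (hmem j) ∈ rookIm e := fun j => by
    rw [mem_rookIm]; exact ⟨_, hfe j⟩
  have hmono : StrictMono (fun j => (e.1 ((rookDom e).orderEmbOfFin rfl j)).get (hmem j)) :=
    fun j j' hjj => e.2.2 _ _ _ _ (hfe j) (hfe j') (((rookDom e).orderEmbOfFin rfl).strictMono hjj)
  have huniq := Finset.orderEmbOfFin_unique hcard hfT hmono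
  rw [hfe j, congrFun huniq j]

lemma PRM.ext_dom_im {d d' : PRM n} (h1 : rookDom d = rookDom d') (h2 : rookIm d = rookIm d') :
    d = d' := by
  apply Subtype.ext; funext x
  by_cases hx : x ∈ rookDom d
  · obtain ⟨j, hj⟩ : ∃ j, (rookDom d).orderEmbOfFin rfl j = x := by
      have hr := Finset.range_orderEmbOfFin (rookDom d) rfl
      have : x ∈ Set.range ((rookDom d).orderEmbOfFin rfl) := by
        rw [hr]; exact hx
      exact this
    rw [← hj, apply_orderEmb d rfl rfl (card_dom_eq_card_im d).symm,
      apply_orderEmb d' h1.symm h2.symm (card_dom_eq_card_im d).symm]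
  · have hx' : x ∉ rookDom d' := h1 ▸ hx
    rw [Option.not_isSome_iff_eq_none.mp (fun h => hx (mem_rookDom.mpr h)),
      Option.not_isSome_iff_eq_none.mp (fun h => hx' (mem_rookDom.mpr h))]

lemma rookDom_mul (d₁ d₂ : PRM n) (h : rookDom d₁ = rookIm d₂) :
    rookDom (d₁ * d₂) = rookDom d₂ := by
  ext x
  rw [mem_rookDom, mem_rookDom, PRM.mul_apply]
  constructor
  · intro hs
    cases hy : d₂.1 x with
    | none => rw [hy] at hs; simp at hs
    | some y => rfl
  · intro hs
    obtain ⟨y, hy⟩ := Option.isSome_iff_exists.mp hs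
    have hyD : y ∈ rookDom d₁ := by rw [h, mem_rookIm]; exact ⟨x, hy⟩
    rw [hy]
    exact mem_rookDom.mp hyD

lemma rookIm_mul (d₁ d₂ : PRM n) (h : rookDom d₁ = rookIm d₂) :
    rookIm (d₁ * d₂) = rookIm d₁ := by
  ext j
  rw [mem_rookIm, mem_rookIm]
  constructor
  · rintro ⟨x, hx⟩
    rw [PRM.mul_apply] at hx
    obtain ⟨y, hy, hxy⟩ := Option.bind_eq_some_iff.mp hx
    exact ⟨y, hxy⟩
  · rintro ⟨y, hy⟩
    have hyD : y ∈ rookDom d₁ := mem_rookDom.mpr (by rw [hy]; rfl)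
    rw [h, mem_rookIm] at hyD
    obtain ⟨x, hx⟩ := hyD
    exact ⟨x, by rw [PRM.mul_apply, hx]; exact hy⟩

end PRMaux2

section PRMmain

variable {n : ℕ}

lemma XdInnerSum (d₁ d₂ : PRM n) (s : Finset (Fin n)) :
    ∑ t ∈ (rookDom d₂).powerset, ((-1:ℂ))^((rookDom d₂).card - t.card) •
        MonoidAlgebra.single (rookRestrict (d₁ * d₂) (phi d₂ s t)) (1:ℂ)
      = (if rookIm d₂ ⊆ s then (1:ℂ) else 0) •
        ∑ u ∈ (rookDom d₂).powerset, ((-1:ℂ))^((rookDom d₂).card - u.card) •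
          MonoidAlgebra.single (rookRestrict (d₁ * d₂) u) (1:ℂ) := by
  by_cases hs : rookIm d₂ ⊆ s
  · rw [if_pos hs, one_smul]
    apply Finset.sum_congr rfl
    intro t ht
    have hphi : phi d₂ s t = t := by
      apply Finset.filter_true_of_mem
      intro x hx
      have hx' : x ∈ rookDom d₂ := (Finset.mem_powerset.mp ht) hx
      obtain ⟨y, hy⟩ := Option.isSome_iff_exists.mp (mem_rookDom.mp hx')
      exact ⟨y, hs (mem_rookIm.mpr ⟨x, hy⟩), hy⟩
    rw [hphi]
  · rw [if_neg hs, zero_smul]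
    obtain ⟨y₀, hy₀I, hy₀s⟩ := Finset.not_subset.mp hs
    obtain ⟨x₀, hx₀⟩ := mem_rookIm.mp hy₀I
    have hx₀D : x₀ ∈ rookDom d₂ := mem_rookDom.mpr (by rw [hx₀]; rfl)
    have hpred : ¬ (∃ y ∈ s, d₂.1 x₀ = some y) := by
      rintro ⟨y, hys, hy⟩
      rw [hx₀] at hy
      exact hy₀s (Option.some.inj hy ▸ hys)
    have hphi_ins : ∀ t, phi d₂ s (insert x₀ t) = phi d₂ s t := by
      intro t
      rw [phi, phi, Finset.filter_insert, if_neg hpred]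
    have hphi_ers : ∀ t, phi d₂ s (t.erase x₀) = phi d₂ s t := by
      intro t
      rw [phi, phi, Finset.filter_erase]
      apply Finset.erase_eq_of_notMem
      simp only [Finset.mem_filter]
      exact fun h => hpred h.2
    calc ∑ t ∈ (rookDom d₂).powerset, ((-1:ℂ))^((rookDom d₂).card - t.card) •
          MonoidAlgebra.single (rookRestrict (d₁ * d₂) (phi d₂ s t)) (1:ℂ)
        = ∑ t ∈ (rookDom d₂).powerset, (-1:ℂ)^(rookDom d₂).card •
            ((-1:ℂ)^t.card • MonoidAlgebra.single (rookRestrict (d₁ * d₂) (phi d₂ s t)) (1:ℂ)) := by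
          apply Finset.sum_congr rfl
          intro t ht
          rw [neg_one_pow_sub_c (Finset.card_le_card (Finset.mem_powerset.mp ht)), mul_smul]
      _ = (-1:ℂ)^(rookDom d₂).card • ∑ t ∈ (rookDom d₂).powerset,
            ((-1:ℂ)^t.card • MonoidAlgebra.single (rookRestrict (d₁ * d₂) (phi d₂ s t)) (1:ℂ)) :=
          (Finset.smul_sum).symm
      _ = 0 := by
          rw [sum_toggle_eq_zero (rookDom d₂)
            (fun t => MonoidAlgebra.single (rookRestrict (d₁ * d₂) (phi d₂ s t)) (1:ℂ)) x₀ hx₀D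
            (fun t => by rw [hphi_ins t]) (fun t => by rw [hphi_ers t]), smul_zero]

lemma Xd_mul (d₁ d₂ : PRM n) :
    Xd d₁ * Xd d₂ = (if rookIm d₂ = rookDom d₁ then (1:ℂ) else 0) •
      ∑ u ∈ (rookDom d₂).powerset, ((-1:ℂ))^((rookDom d₂).card - u.card) •
        MonoidAlgebra.single (rookRestrict (d₁ * d₂) u) (1:ℂ) := by
  rw [Xd, Xd, Finset.sum_mul_sum]
  calc ∑ s ∈ (rookDom d₁).powerset, ∑ t ∈ (rookDom d₂).powerset,
        ((-1:ℂ)^((rookDom d₁).card - s.card) • MonoidAlgebra.single (rookRestrict d₁ s) (1:ℂ)) *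
        ((-1:ℂ)^((rookDom d₂).card - t.card) • MonoidAlgebra.single (rookRestrict d₂ t) (1:ℂ))
      = ∑ s ∈ (rookDom d₁).powerset, (-1:ℂ)^((rookDom d₁).card - s.card) •
          ∑ t ∈ (rookDom d₂).powerset, (-1:ℂ)^((rookDom d₂).card - t.card) •
            MonoidAlgebra.single (rookRestrict (d₁ * d₂) (phi d₂ s t)) (1:ℂ) := by
        apply Finset.sum_congr rfl; intro s hs
        rw [Finset.smul_sum]
        apply Finset.sum_congr rfl; intro t ht
        rw [smul_mul_smul_comm, MonoidAlgebra.single_mul_single, one_mul, restrict_mul, mul_smul]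
    _ = ∑ s ∈ (rookDom d₁).powerset, (-1:ℂ)^((rookDom d₁).card - s.card) •
          ((if rookIm d₂ ⊆ s then (1:ℂ) else 0) •
            ∑ u ∈ (rookDom d₂).powerset, ((-1:ℂ))^((rookDom d₂).card - u.card) •
              MonoidAlgebra.single (rookRestrict (d₁ * d₂) u) (1:ℂ)) := by
        apply Finset.sum_congr rfl; intro s hs
        rw [XdInnerSum]
    _ = ∑ s ∈ (rookDom d₁).powerset,
          (if rookIm d₂ ⊆ s then (-1:ℂ)^((rookDom d₁).card - s.card) else 0) •
            ∑ u ∈ (rookDom d₂).powerset, ((-1:ℂ))^((rookDom d₂).card - u.card) •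
              MonoidAlgebra.single (rookRestrict (d₁ * d₂) u) (1:ℂ) := by
        apply Finset.sum_congr rfl; intro s hs
        by_cases h : rookIm d₂ ⊆ s
        · rw [if_pos h, if_pos h, one_smul]
        · rw [if_neg h, if_neg h, zero_smul, smul_zero]
    _ = (∑ s ∈ (rookDom d₁).powerset,
          (if rookIm d₂ ⊆ s then (-1:ℂ)^((rookDom d₁).card - s.card) else 0)) •
            ∑ u ∈ (rookDom d₂).powerset, ((-1:ℂ))^((rookDom d₂).card - u.card) •
              MonoidAlgebra.single (rookRestrict (d₁ * d₂) u) (1:ℂ) := by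
        rw [Finset.sum_smul]
    _ = _ := by rw [sum_sign_filter_subset]

end PRMmain

/-- `X_{d₁} X_{d₂} = δ_{β(d₁), τ(d₂)} X_{d₃}`, where `d₃` is the unique diagram with
domain `β(d₂)` and image `τ(d₁)`: the elements `X_d` are matrix units for `ℂ P_n`. -/
theorem Xd_matrix_units (n : ℕ) (d₁ d₂ : PRM n) :
    (rookDom d₁ ≠ rookIm d₂ → Xd d₁ * Xd d₂ = 0) ∧
    (rookDom d₁ = rookIm d₂ →
      ∃! d₃ : PRM n, rookDom d₃ = rookDom d₂ ∧ rookIm d₃ = rookIm d₁ ∧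
        Xd d₁ * Xd d₂ = Xd d₃) := by
  constructor
  · intro h
    rw [Xd_mul, if_neg (fun he => h he.symm), zero_smul]
  · intro h
    refine ⟨d₁ * d₂, ⟨rookDom_mul d₁ d₂ h, rookIm_mul d₁ d₂ h, ?_⟩, ?_⟩
    · rw [Xd_mul, if_pos h.symm, one_smul, Xd, rookDom_mul d₁ d₂ h]
    · rintro d' ⟨hd1, hd2, -⟩
      exact PRM.ext_dom_im (hd1.trans (rookDom_mul d₁ d₂ h).symm)
        (hd2.trans (rookIm_mul d₁ d₂ h).symm)
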